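/- If G is a finite non-abelian group, then the probability that two uniformly random elements of G commute is at most 5/8. -/

import Mathlib

open ConjClasses

lemma center_card_le (G : Type*) [Group G] [Finite G] (h : ¬ ∀ a b : G, a * b = b * a) :
    4 * Nat.card (Subgroup.center G) ≤ Nat.card G := by
  have hcard : Nat.card (Subgroup.center G) * (Subgroup.center G).index = Nat.card G :=
    Subgroup.card_mul_index _
  have hnc : ¬ IsCyclic (G ⧸ Subgroup.center G) := by
    intro hc
    exact h (commutative_of_cyclic_center_quotient (QuotientGroup.mk' (Subgroup.center G))
      (by rw [QuotientGroup.ker_mk']))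
  have hidx : (Subgroup.center G).index = Nat.card (G ⧸ Subgroup.center G) := rfl
  have hpos : 0 < Nat.card (G ⧸ Subgroup.center G) := Nat.card_pos
  have h4 : 4 ≤ Nat.card (G ⧸ Subgroup.center G) := by
    by_contra hlt
    push_neg at hlt
    interval_cases hq : Nat.card (G ⧸ Subgroup.center G)
    · haveI := (Nat.card_eq_one_iff_unique.mp hq).1
      exact hnc isCyclic_of_subsingleton
    · exact hnc (isCyclic_of_prime_card (p := 2) hq)
    · exact hnc (isCyclic_of_prime_card (p := 3) hq)
  calc 4 * Nat.card (Subgroup.center G)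
      ≤ Nat.card (G ⧸ Subgroup.center G) * Nat.card (Subgroup.center G) :=
        Nat.mul_le_mul_right _ h4
    _ = Nat.card G := by rw [mul_comm, ← hidx, hcard]

lemma conjClasses_card_le (G : Type*) [Group G] [Finite G] :
    2 * Nat.card (ConjClasses G) ≤ Nat.card G + Nat.card (Subgroup.center G) := by
  classical
  cases nonempty_fintype G
  have hclass := Group.card_center_add_sum_card_noncenter_eq_card G
  have hk : Fintype.card (ConjClasses G)
      = (noncenter G).toFinset.card + Fintype.card (Subgroup.center G) := by
    rw [← Finset.card_add_card_compl (noncenter G).toFinset]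
    congr 1
    rw [← Set.toFinset_compl, Set.toFinset_card]
    exact (Fintype.card_congr ((mk_bijOn G).equiv _)).symm.trans (Fintype.card_congr' rfl)
  have hsum : 2 * (noncenter G).toFinset.card
      ≤ ∑ x ∈ (noncenter G).toFinset, x.carrier.toFinset.card := by
    rw [Finset.card_eq_sum_ones, Finset.mul_sum]
    refine Finset.sum_le_sum fun x hx => ?_
    have hnt : x.carrier.Nontrivial := by
      simpa [ConjClasses.noncenter] using Set.mem_toFinset.mp hx
    obtain ⟨a, ha, b, hb, hab⟩ := hnt
    rw [mul_one]
    exact Finset.one_lt_card_iff.mpr ⟨a, b, by simpa using ha, by simpa using hb, hab⟩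
  simp only [Nat.card_eq_fintype_card]
  omega

/-- Gustafson: a finite non-abelian group has commuting probability at most 5/8. -/
theorem commuting_probability_le_five_eighths
    (G : Type*) [Group G] [Finite G] (h : ¬ ∀ a b : G, a * b = b * a) :
    (Nat.card {p : G × G // p.1 * p.2 = p.2 * p.1} : ℚ) / (Nat.card G : ℚ) ^ 2 ≤ 5 / 8 := by
  have hcount : Nat.card {p : G × G // p.1 * p.2 = p.2 * p.1}
      = Nat.card (ConjClasses G) * Nat.card G :=
    card_comm_eq_card_conjClasses_mul_card G
  have h1 := conjClasses_card_le G
  have h2 := center_card_le G h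
  have hn : 0 < Nat.card G := Nat.card_pos
  have key : 8 * Nat.card {p : G × G // p.1 * p.2 = p.2 * p.1} ≤ 5 * Nat.card G ^ 2 := by
    rw [hcount]
    nlinarith [h1, h2, hn]
  rw [div_le_div_iff₀ (by positivity) (by norm_num : (0:ℚ) < 8)]
  have := (Nat.cast_le (α := ℚ)).mpr key
  push_cast at this ⊢
  linarith
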